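/- Let $C_*$ be a Banach chain complex over $\mathbb{R}$ and $k \in \mathbb{N}$. Then $C_*$ satisfies the uniform boundary condition in degree $k$ if and only if the homology $H_k(C_*) = \ker \partial_k / \operatorname{im} \partial_{k+1}$, equipped with the quotient seminorm induced by the norm on $C_k$, is a normed space (i.e., the induced seminorm is a norm), in which case it is a Banach space. -/

import Mathlib

/-- The `k`-th homology `ker ∂_k / im ∂_{k+1}` of a chain complex (indexed so that
`d n : C n → C (n-1)` is `∂_n`), equipped with the quotient seminorm of the norm of `C k`. -/
abbrev homologyOf (C : ℕ → Type*) [∀ n, NormedAddCommGroup (C n)] [∀ n, NormedSpace ℝ (C n)]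
    (d : ∀ n, C n →L[ℝ] C (n - 1)) (k : ℕ) :=
  ↥(LinearMap.ker (d k)) ⧸
    Submodule.comap (LinearMap.ker (d k).toLinearMap).subtype (LinearMap.range (d (k + 1)).toLinearMap)

/-- **Matsumoto–Morita: UBC and the induced seminorm on homology.**
Let `C_*` be a Banach chain complex over `ℝ` and `k ∈ ℕ`.  Then `C_*` satisfies the uniform
boundary condition in degree `k` if and only if the homology `H_k(C_*) = ker ∂_k / im ∂_{k+1}`,
equipped with the quotient seminorm induced by the norm on `C_k`, is a normed space
(the induced seminorm is a norm); in that case it is moreover a Banach space (complete). -/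
theorem stmt3 (C : ℕ → Type*) [∀ n, NormedAddCommGroup (C n)] [∀ n, NormedSpace ℝ (C n)]
    [∀ n, CompleteSpace (C n)]
    (d : ∀ n, C n →L[ℝ] C (n - 1))
    (h0 : ∀ x : C 0, d 0 x = 0)
    (hdd : ∀ n x, d (n - 1) (d n x) = 0) (k : ℕ) :
    ((∃ K > 0, ∀ b ∈ Set.range (d (k + 1)), ∃ c, d (k + 1) c = b ∧ ‖c‖ ≤ K * ‖b‖) ↔
      ∀ x : homologyOf C d k, ‖x‖ = 0 → x = 0) ∧
    ((∃ K > 0, ∀ b ∈ Set.range (d (k + 1)), ∃ c, d (k + 1) c = b ∧ ‖c‖ ≤ K * ‖b‖) →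
      CompleteSpace (homologyOf C d k)) := by
  have hrange_le : LinearMap.range (d (k + 1)).toLinearMap ≤ LinearMap.ker (d k).toLinearMap := by
    rintro x ⟨y, rfl⟩
    exact hdd (k + 1) y
  have hVcl : IsClosed ((LinearMap.ker (d k).toLinearMap : Submodule ℝ (C k)) : Set (C k)) :=
    ContinuousLinearMap.isClosed_ker (d k)
  set W : Submodule ℝ ↥(LinearMap.ker (d k).toLinearMap) :=
    Submodule.comap (LinearMap.ker (d k).toLinearMap).subtype (LinearMap.range (d (k + 1)).toLinearMap) with hW
  -- UBC implies the range of `d (k+1)` is closed.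
  have key : (∃ K > 0, ∀ b ∈ Set.range (d (k + 1)), ∃ c, d (k + 1) c = b ∧ ‖c‖ ≤ K * ‖b‖) →
      IsClosed ((LinearMap.range (d (k + 1)).toLinearMap : Submodule ℝ (C k)) : Set (C k)) := by
    rintro ⟨K, hK, hUBC⟩
    set F : NormedAddGroupHom (C (k + 1)) (C k) :=
      { toFun := d (k + 1), map_add' := map_add _,
        bound' := ⟨‖d (k + 1)‖, fun x => (d (k + 1)).le_opNorm x⟩ } with hF
    have hyp : F.SurjectiveOnWith
        (LinearMap.range (d (k + 1)).toLinearMap : Submodule ℝ (C k)).toAddSubgroup K := by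
      intro b hb
      obtain ⟨c, hc, hcn⟩ := hUBC b (by obtain ⟨y, hy⟩ := hb; exact ⟨y, hy⟩)
      exact ⟨c, hc, hcn⟩
    have hcc := controlled_closure_of_complete hK one_pos hyp
    apply isClosed_of_closure_subset
    intro b hb
    obtain ⟨g, hg, -⟩ := hcc b hb
    exact ⟨g, hg⟩
  -- closed range ⇒ the seminorm is a norm
  have normOf : IsClosed ((LinearMap.range (d (k + 1)).toLinearMap : Submodule ℝ (C k)) : Set (C k)) →
      ∀ x : homologyOf C d k, ‖x‖ = 0 → x = 0 := by
    intro hcl x hx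
    obtain ⟨m, rfl⟩ := Submodule.Quotient.mk_surjective _ x
    have hWcl : IsClosed (W : Set ↥(LinearMap.ker (d k).toLinearMap)) :=
      hcl.preimage continuous_subtype_val
    rw [Submodule.Quotient.mk_eq_zero]
    have h0' : ‖QuotientAddGroup.mk' W.toAddSubgroup m‖ = 0 := hx
    replace h0' := QuotientAddGroup.norm_mk_eq_zero_iff_mem_closure.mp h0'
    have h1 : m ∈ closure (W : Set ↥(LinearMap.ker (d k).toLinearMap)) := h0'
    rwa [hWcl.closure_eq] at h1
  -- norm ⇒ UBC
  have toUBC : (∀ x : homologyOf C d k, ‖x‖ = 0 → x = 0) →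
      (∃ K > 0, ∀ b ∈ Set.range (d (k + 1)), ∃ c, d (k + 1) c = b ∧ ‖c‖ ≤ K * ‖b‖) := by
    intro hnorm
    have hWcl : IsClosed (W : Set ↥(LinearMap.ker (d k).toLinearMap)) := by
      apply isClosed_of_closure_subset
      intro s hs
      have hz : ‖(Submodule.Quotient.mk s : homologyOf C d k)‖ = 0 := by
        have : ‖QuotientAddGroup.mk' W.toAddSubgroup s‖ = 0 :=
          QuotientAddGroup.norm_mk_eq_zero_iff_mem_closure.mpr hs
        exact this
      have := hnorm _ hz
      rwa [Submodule.Quotient.mk_eq_zero] at this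
    have hcl : IsClosed ((LinearMap.range (d (k + 1)).toLinearMap : Submodule ℝ (C k)) : Set (C k)) := by
      have himg := hVcl.isClosedEmbedding_subtypeVal.isClosedMap _ hWcl
      convert himg using 1
      ext b
      constructor
      · intro hb
        exact ⟨⟨b, hrange_le hb⟩, hb, rfl⟩
      · rintro ⟨⟨b, hbV⟩, hbW, rfl⟩
        exact hbW
    haveI : CompleteSpace ↥(LinearMap.range (d (k + 1)).toLinearMap) :=
      hcl.completeSpace_coe
    set f' := (d (k + 1)).codRestrict (LinearMap.range (d (k + 1)).toLinearMap)
      (fun x => LinearMap.mem_range.mpr ⟨x, rfl⟩) with hf'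
    have hsurj : Function.Surjective f' := by
      rintro ⟨y, x, rfl⟩
      exact ⟨x, rfl⟩
    obtain ⟨Kc, hKc, hKc'⟩ := f'.exists_preimage_norm_le hsurj
    refine ⟨Kc, hKc, ?_⟩
    rintro b ⟨c0, rfl⟩
    obtain ⟨x, hx, hxn⟩ := hKc' ⟨d (k + 1) c0, LinearMap.mem_range.mpr ⟨c0, rfl⟩⟩
    exact ⟨x, congrArg Subtype.val hx, hxn⟩
  haveI : CompleteSpace ↥(LinearMap.ker (d k).toLinearMap) :=
    hVcl.completeSpace_coe
  exact ⟨⟨fun h => normOf (key h), toUBC⟩, fun _ => inferInstance⟩
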